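/- Any p-orthogonal set in a real normed space X (with ⊥_p additive on X), 1 ≤ p < ∞, is linearly independent. -/
import Mathlib


/-- `x ⊥_p y`: `‖x + k • y‖ ^ p = ‖x‖ ^ p + ‖k • y‖ ^ p` for all `k : ℝ`. -/
def PerpP {X : Type*} [NormedAddCommGroup X] [NormedSpace ℝ X] (p : ℝ) (x y : X) : Prop :=
  ∀ k : ℝ, ‖x + k • y‖ ^ p = ‖x‖ ^ p + ‖k • y‖ ^ p

lemma perp_smul {X : Type*} [NormedAddCommGroup X] [NormedSpace ℝ X] {p : ℝ} {x y : X}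
    (h : PerpP p x y) (c : ℝ) : PerpP p x (c • y) := by
  intro k
  rw [smul_smul]
  exact h (k * c)

lemma perp_zero {X : Type*} [NormedAddCommGroup X] [NormedSpace ℝ X] {p : ℝ} (hp : p ≠ 0)
    (x : X) : PerpP p x 0 := by
  intro k
  simp [Real.zero_rpow hp]

lemma perp_sum {X : Type*} [NormedAddCommGroup X] [NormedSpace ℝ X] {p : ℝ} (hp : p ≠ 0)
    (hadd : ∀ a b c : X, PerpP p a b → PerpP p a c → PerpP p a (b + c))
    {ι : Type*} (t : Finset ι) (f : ι → X) (x : X) (h : ∀ i ∈ t, PerpP p x (f i)) :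
    PerpP p x (∑ i ∈ t, f i) := by
  classical
  induction t using Finset.induction with
  | empty => simpa using perp_zero hp x
  | @insert a s hni ih =>
    rw [Finset.sum_insert hni]
    exact hadd _ _ _ (h a (Finset.mem_insert_self a s))
      (ih fun i hi => h i (Finset.mem_insert_of_mem hi))

theorem stmt2 {X : Type*} [NormedAddCommGroup X] [NormedSpace ℝ X]
    (p : ℝ) (hp : 1 ≤ p) (S : Set X)
    (h0 : (0 : X) ∉ S)
    (horth : ∀ x ∈ S, ∀ y ∈ S, x ≠ y → PerpP p x y)
    (hadd : ∀ a b c : X, PerpP p a b → PerpP p a c → PerpP p a (b + c)) :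
    LinearIndependent ℝ (fun s : S => (s : X)) := by
  classical
  have hp0 : p ≠ 0 := by positivity
  rw [linearIndependent_iff']
  intro t g hsum i hit
  by_contra hgi
  set y : X := ∑ j ∈ t.erase i, g j • (j : X) with hy
  have hperp : PerpP p (i : X) y := by
    apply perp_sum hp0 hadd
    intro j hj
    have hji : j ≠ i := Finset.ne_of_mem_erase hj
    have : (i : X) ≠ (j : X) := fun h => hji (Subtype.coe_injective h.symm)
    exact perp_smul (horth _ i.2 _ j.2 this) (g j)
  have hsum' : g i • (i : X) + y = 0 := by
    rw [hy, Finset.add_sum_erase t (fun j => g j • (j : X)) hit]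
    exact hsum
  have hyi : y = -(g i • (i : X)) := by linear_combination (norm := abel) hsum'
  have key := hperp (1 / g i)
  have hcalc : (i : X) + (1 / g i) • y = 0 := by
    rw [hyi, smul_neg, smul_smul, one_div, inv_mul_cancel₀ hgi, one_smul]
    abel
  have hcalc2 : (1 / g i) • y = -(i : X) := by
    rw [hyi, smul_neg, smul_smul, one_div, inv_mul_cancel₀ hgi, one_smul]
  rw [hcalc, hcalc2, norm_neg, norm_zero, Real.zero_rpow hp0] at key
  have hipos : (0 : ℝ) < ‖(i : X)‖ := by
    rw [norm_pos_iff]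
    intro h
    exact h0 (h ▸ i.2)
  have : (0 : ℝ) < ‖(i : X)‖ ^ p := Real.rpow_pos_of_pos hipos p
  linarith
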